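/- For a matroid M on [n], the weighted quasisymmetric enumerator of the matroid base polytope coincides with the value of the universal morphism of combinatorial Hopf algebras: F_q(P_M) = Ψ_q([M]). Equivalently, F_q(P_M) = Σ_F q^{rk_{P_M}(F)} M_{type(F)} with coefficient of M_α equal to Σ_{F: type(F)=α} Π_i q^{rk((M|_{F_i})/F_{i−1})}, where rk(N) = (size of ground set of N) − c(N). -/

import Mathlib

open scoped Classical Pointwise BigOperators


/-- The dot product pairing on `ℝⁿ`. -/
def dotp {n : ℕ} (ω x : Fin n → ℝ) : ℝ := ∑ i, ω i * x i

/-- The set of points of `Q` on which the linear functional `⟨ω, ·⟩` attains its maximum. -/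
def argmaxSet {n : ℕ} (Q : Set (Fin n → ℝ)) (ω : Fin n → ℝ) : Set (Fin n → ℝ) :=
  {x | x ∈ Q ∧ ∀ y ∈ Q, dotp ω y ≤ dotp ω x}

/-- `G` is a face of `Q` : it is the argmax set of some linear functional. -/
def IsFace {n : ℕ} (Q G : Set (Fin n → ℝ)) : Prop := ∃ ω : Fin n → ℝ, G = argmaxSet Q ω

/-- The dimension of a convex body: the rank of its direction vector space. -/
noncomputable def pdim {n : ℕ} (s : Set (Fin n → ℝ)) : ℕ := Module.finrank ℝ (vectorSpan ℝ s)

/-- `Q` is a (nonempty) convex polytope. -/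
def IsPolytope {n : ℕ} (Q : Set (Fin n → ℝ)) : Prop :=
  ∃ V : Finset (Fin n → ℝ), V.Nonempty ∧ Q = convexHull ℝ (V : Set (Fin n → ℝ))

/-- A flag `∅ ⊂ F₁ ⊂ ⋯ ⊂ F_k ⊂ [n]` of subsets of `[n]`, recorded by its set
`C = {F₁,…,F_k}` of proper nonempty intermediate subsets, which form a chain. -/
def IsFlag (n : ℕ) (C : Finset (Finset (Fin n))) : Prop :=
  (∀ A ∈ C, A.Nonempty ∧ A ≠ Finset.univ) ∧ (∀ A ∈ C, ∀ B ∈ C, A ⊆ B ∨ B ⊆ A)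

/-- The level of an element: the number of members of the chain not containing it.  Elements of
`F_i ∖ F_{i-1}` have level `i - 1`-ish: level `0` on the smallest set, etc. -/
def lv {n : ℕ} (C : Finset (Finset (Fin n))) (p : Fin n) : ℕ := (C.filter (fun A => p ∉ A)).card

/-- The `j`-th member `F_j` of the full chain `∅ = F₀ ⊂ F₁ ⊂ ⋯ ⊂ F_{k+1} = [n]` of the flag. -/
def fullChain {n : ℕ} (C : Finset (Finset (Fin n))) (j : ℕ) : Finset (Fin n) :=
  Finset.univ.filter (fun p => lv C p < j)

/-- The type of a flag: the composition `(|F₁|-|F₀|, …, |F_{k+1}|-|F_k|)` of `n`. -/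
def flagType {n : ℕ} (C : Finset (Finset (Fin n))) : List ℕ :=
  (List.range (C.card + 1)).map (fun j => (fullChain C (j + 1)).card - (fullChain C j).card)

/-- The relative interior of the braid cone of a flag: weight vectors `ω` that are constant on
each block `F_i ∖ F_{i-1}` and satisfy `ω|_{F_{i+1}∖F_i} < ω|_{F_i∖F_{i-1}}` (strictly
decreasing along the flag). -/
def relintBraidCone {n : ℕ} (C : Finset (Finset (Fin n))) : Set (Fin n → ℝ) :=
  {x | ∀ p q : Fin n, ((∀ A ∈ C, (p ∈ A ↔ q ∈ A)) → x p = x q) ∧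
      ((∃ A ∈ C, p ∈ A ∧ q ∉ A) → x q < x p)}

/-- Homogeneous quasisymmetric functions in the monomial basis: finitely supported
coefficient functions on compositions (lists of positive integers). -/
abbrev QS : Type := (List ℕ) →₀ ℚ

/-- The monomial quasisymmetric function `M_α`. -/
noncomputable def Mc (l : List ℕ) : QS := Finsupp.single l 1

/-- The principal specialization at `-1`:  `ps(M_α)(-1) = (-1)^{k(α)}`, extended linearly. -/
noncomputable def psNeg (f : QS) : ℚ := f.sum (fun l c => c * (-1) ^ l.length)

/-- The `f`-polynomial of a polytope `P ⊆ ℝⁿ`, evaluated at `t`. -/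
noncomputable def fPoly {n : ℕ} (P : Set (Fin n → ℝ)) (t : ℚ) : ℚ :=
  ∑ i ∈ Finset.range n, ((Set.ncard {G : Set (Fin n → ℝ) | IsFace P G ∧ pdim G = i} : ℚ) * t ^ i)

/-- The weighted quasisymmetric enumerator `F_q(Q) = Σ_F q^{rk(F)} M_{type(F)}`, where the rank
statistic `rk` on flags is given as an argument. -/
noncomputable def FqEnum (n : ℕ) (rk : Finset (Finset (Fin n)) → ℕ) (q : ℚ) : QS :=
  ∑ C : Finset (Finset (Fin n)), if IsFlag n C then q ^ (rk C) • Mc (flagType C) else 0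

/-- A matroid on `[n]`, given by its nonempty collection of bases satisfying the exchange
property. -/
def IsMatroid (n : ℕ) (𝓑 : Finset (Finset (Fin n))) : Prop :=
  𝓑.Nonempty ∧
    ∀ B₁ ∈ 𝓑, ∀ B₂ ∈ 𝓑, ∀ i ∈ B₁ \ B₂, ∃ j ∈ B₂ \ B₁, insert j (B₁.erase i) ∈ 𝓑

/-- The indicator vector `e_B = Σ_{i ∈ B} e_i` of a subset `B ⊆ [n]`. -/
def indVec {n : ℕ} (B : Finset (Fin n)) : Fin n → ℝ := fun i => if i ∈ B then 1 else 0

/-- The matroid base polytope `P_M = Conv{e_B : B ∈ 𝓑(M)}`. -/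
noncomputable def basePoly {n : ℕ} (𝓑 : Finset (Finset (Fin n))) : Set (Fin n → ℝ) :=
  convexHull ℝ (indVec '' (𝓑 : Set (Finset (Fin n))))

/-- The basis-exchange relation whose equivalence classes are the connected components of the
matroid: `i ~ j` iff there are bases `B₁, B₂` with `i ∈ B₁` and `B₂ = (B₁ ∖ {i}) ∪ {j}`. -/
def mRel {n : ℕ} (𝓑 : Finset (Finset (Fin n))) (i j : Fin n) : Prop :=
  ∃ B₁ ∈ 𝓑, i ∈ B₁ ∧ insert j (B₁.erase i) ∈ 𝓑

/-- The number of connected components of (the matroid with bases) `𝓑` that meet the ground set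
`ground`: the number of equivalence classes of the component relation restricted to `ground`. -/
noncomputable def cOn {n : ℕ} (ground : Finset (Fin n)) (𝓑 : Finset (Finset (Fin n))) : ℕ :=
  Set.ncard (Quot.mk (mRel 𝓑) '' (ground : Set (Fin n)))

/-- A subset is independent if it is contained in a basis. -/
def mIndep {n : ℕ} (𝓑 : Finset (Finset (Fin n))) (I : Finset (Fin n)) : Prop :=
  ∃ B ∈ 𝓑, I ⊆ B

/-- The bases of the restriction `M|_A`: maximal independent subsets of `A`. -/
noncomputable def basesRestrict {n : ℕ} (𝓑 : Finset (Finset (Fin n))) (A : Finset (Fin n)) :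
    Finset (Finset (Fin n)) :=
  A.powerset.filter (fun I => mIndep 𝓑 I ∧ ∀ J ∈ A.powerset, mIndep 𝓑 J → I ⊆ J → I = J)

/-- The bases of the contraction `M/A`: sets `I` disjoint from `A` such that `I ∪ B_A` is a basis
for some basis `B_A` of `M|_A`. -/
noncomputable def basesContract {n : ℕ} (𝓑 : Finset (Finset (Fin n))) (A : Finset (Fin n)) :
    Finset (Finset (Fin n)) :=
  (Finset.univ : Finset (Fin n)).powerset.filter
    (fun I => Disjoint I A ∧ ∃ BA ∈ basesRestrict 𝓑 A, I ∪ BA ∈ 𝓑)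

/-- The bases of the minor `(M|_X)/Y`. -/
noncomputable def minorBases {n : ℕ} (𝓑 : Finset (Finset (Fin n))) (X Y : Finset (Fin n)) :
    Finset (Finset (Fin n)) :=
  basesContract (basesRestrict 𝓑 X) Y

/-- The rank `r(A)` of a subset `A`: the size of a basis of `M|_A`. -/
noncomputable def rankOf {n : ℕ} (𝓑 : Finset (Finset (Fin n))) (A : Finset (Fin n)) : ℕ :=
  (basesRestrict 𝓑 A).sup Finset.card

/-- The bases of the matroid `M/F = M_ω` attached to a flag `F` (for any `ω` in the relative
interior of the braid cone of `F`): the bases of maximum `ω`-weight, i.e. those `B` with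
`|B ∩ F_i| = r(F_i)` for every member `F_i` of the full chain of the flag. -/
noncomputable def flagQuotBases {n : ℕ} (𝓑 : Finset (Finset (Fin n))) (C : Finset (Finset (Fin n))) :
    Finset (Finset (Fin n)) :=
  𝓑.filter (fun B => ∀ j ∈ Finset.range (C.card + 2), (B ∩ fullChain C j).card = rankOf 𝓑 (fullChain C j))

/-- The rank statistic `rk_{P_M}(F) = Σ_j rk((M|_{F_j})/F_{j-1})` of a flag, where
`rk(N) = (size of ground set of N) - c(N)`. -/
noncomputable def rkM {n : ℕ} (𝓑 : Finset (Finset (Fin n))) (C : Finset (Finset (Fin n))) : ℕ :=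
  ∑ j ∈ Finset.range (C.card + 1),
    ((fullChain C (j + 1)).card - (fullChain C j).card -
      cOn ((fullChain C (j + 1)) \ (fullChain C j))
        (minorBases 𝓑 (fullChain C (j + 1)) (fullChain C j)))


/-! ### Auxiliary development: finite matroid theory from the base-exchange axiom -/

section MatroidBasics

variable {n : ℕ} {𝓑 : Finset (Finset (Fin n))}

lemma mIndep_mono {I J : Finset (Fin n)} (h : mIndep 𝓑 J) (hIJ : I ⊆ J) : mIndep 𝓑 I := by
  obtain ⟨B, hB, hJB⟩ := h
  exact ⟨B, hB, hIJ.trans hJB⟩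

lemma mem_basesRestrict {A I : Finset (Fin n)} :
    I ∈ basesRestrict 𝓑 A ↔
      I ⊆ A ∧ mIndep 𝓑 I ∧ ∀ J ⊆ A, mIndep 𝓑 J → I ⊆ J → I = J := by
  simp [basesRestrict, Finset.mem_filter, Finset.mem_powerset, and_assoc]

lemma exists_basesRestrict_superset {A I : Finset (Fin n)} (hI : mIndep 𝓑 I) (hIA : I ⊆ A) :
    ∃ J ∈ basesRestrict 𝓑 A, I ⊆ J := by
  classical
  set S : Finset (Finset (Fin n)) :=
    A.powerset.filter (fun J => mIndep 𝓑 J ∧ I ⊆ J) with hS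
  have hSne : S.Nonempty := ⟨I, by simp [hS, Finset.mem_powerset, hIA, hI]⟩
  obtain ⟨J, hJS, hJmax⟩ := S.exists_max_image Finset.card hSne
  simp only [hS, Finset.mem_filter, Finset.mem_powerset] at hJS
  refine ⟨J, mem_basesRestrict.2 ⟨hJS.1, hJS.2.1, ?_⟩, hJS.2.2⟩
  intro J' hJ'A hJ'ind hJJ'
  have hJ'S : J' ∈ S := by
    simp [hS, Finset.mem_powerset, hJ'A, hJ'ind, hJS.2.2.trans hJJ']
  exact Finset.eq_of_subset_of_card_le hJJ' (hJmax J' hJ'S)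

/-- Key invariance lemma: if `K` is closed under the exchange relation then `|B ∩ K|` is the
same for all bases `B`. -/
lemma card_inter_const (hM : IsMatroid n 𝓑) {K : Finset (Fin n)}
    (hK : ∀ p q, mRel 𝓑 p q → (p ∈ K ↔ q ∈ K)) :
    ∀ B₁ ∈ 𝓑, ∀ B₂ ∈ 𝓑, (B₁ ∩ K).card = (B₂ ∩ K).card := by
  classical
  suffices H : ∀ m : ℕ, ∀ B₁ ∈ 𝓑, ∀ B₂ ∈ 𝓑, (B₁ \ B₂).card = m →
      (B₁ ∩ K).card = (B₂ ∩ K).card by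
    intro B₁ h1 B₂ h2; exact H _ B₁ h1 B₂ h2 rfl
  intro m
  induction m using Nat.strong_induction_on with
  | _ m ih =>
    intro B₁ h1 B₂ h2 hcard
    rcases (B₁ \ B₂).eq_empty_or_nonempty with he | ⟨i, hi⟩
    · have hsub : B₁ ⊆ B₂ := by
        intro x hx
        by_contra hxB
        exact (Finset.notMem_empty x) (he ▸ Finset.mem_sdiff.2 ⟨hx, hxB⟩)
      have hBeq : B₂ = B₁ := by
        by_contra hne
        have : (B₂ \ B₁).Nonempty := by
          rw [Finset.sdiff_nonempty]
          intro hsub2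
          exact hne (Finset.Subset.antisymm hsub2 hsub)
        obtain ⟨i, hi⟩ := this
        obtain ⟨j, hj, _⟩ := hM.2 B₂ h2 B₁ h1 i hi
        rw [he] at hj
        exact Finset.notMem_empty j hj
      rw [hBeq]
    · obtain ⟨j, hj, hB'⟩ := hM.2 B₁ h1 B₂ h2 i hi
      have hiB : i ∈ B₁ := (Finset.mem_sdiff.1 hi).1
      have hiB2 : i ∉ B₂ := (Finset.mem_sdiff.1 hi).2
      have hjB2 : j ∈ B₂ := (Finset.mem_sdiff.1 hj).1
      have hjB : j ∉ B₁ := (Finset.mem_sdiff.1 hj).2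
      have hij : i ≠ j := fun h => hjB (h ▸ hiB)
      have hrel : mRel 𝓑 i j := ⟨B₁, h1, hiB, hB'⟩
      set B₁' := insert j (B₁.erase i) with hB₁'
      have h1' : (B₁' ∩ K).card = (B₁ ∩ K).card := by
        by_cases hiK : i ∈ K
        · have hjK : j ∈ K := (hK i j hrel).1 hiK
          have hset : B₁' ∩ K = insert j ((B₁ ∩ K).erase i) := by
            ext p
            simp only [hB₁', Finset.mem_inter, Finset.mem_insert, Finset.mem_erase]
            constructor
            · rintro ⟨hp1 | ⟨hpne, hp⟩, hpK⟩
              · exact Or.inl hp1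
              · exact Or.inr ⟨hpne, hp, hpK⟩
            · rintro (rfl | ⟨hpne, hp, hpK⟩)
              · exact ⟨Or.inl rfl, hjK⟩
              · exact ⟨Or.inr ⟨hpne, hp⟩, hpK⟩
          rw [hset, Finset.card_insert_of_notMem (fun hjmem =>
            hjB (Finset.mem_inter.1 (Finset.mem_of_mem_erase hjmem)).1),
            Finset.card_erase_of_mem (Finset.mem_inter.2 ⟨hiB, hiK⟩)]
          have : 0 < (B₁ ∩ K).card :=
            Finset.card_pos.2 ⟨i, Finset.mem_inter.2 ⟨hiB, hiK⟩⟩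
          omega
        · have hjK : j ∉ K := fun h => hiK ((hK i j hrel).2 h)
          have hset : B₁' ∩ K = B₁ ∩ K := by
            ext p
            simp only [hB₁', Finset.mem_inter, Finset.mem_insert, Finset.mem_erase]
            constructor
            · rintro ⟨hp1 | ⟨hpne, hp⟩, hpK⟩
              · exact absurd (hp1 ▸ hpK) hjK
              · exact ⟨hp, hpK⟩
            · rintro ⟨hp, hpK⟩
              have hpi : p ≠ i := fun h => hiK (h ▸ hpK)
              exact ⟨Or.inr ⟨hpi, hp⟩, hpK⟩
          rw [hset]
      have hd : (B₁' \ B₂).card < m := by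
        have hset : B₁' \ B₂ = (B₁ \ B₂).erase i := by
          ext p
          simp only [hB₁', Finset.mem_sdiff, Finset.mem_insert, Finset.mem_erase]
          constructor
          · rintro ⟨hp1 | ⟨hpne, hp⟩, hpB2⟩
            · exact absurd (hp1 ▸ hjB2) hpB2
            · exact ⟨hpne, hp, hpB2⟩
          · rintro ⟨hpne, hp, hpB2⟩
            exact ⟨Or.inr ⟨hpne, hp⟩, hpB2⟩
        rw [hset, Finset.card_erase_of_mem hi, hcard]
        have : 0 < m := hcard ▸ Finset.card_pos.2 ⟨i, hi⟩
        omega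
      rw [← h1']
      exact ih _ hd B₁' hB' B₂ h2 rfl

lemma card_bases_eq (hM : IsMatroid n 𝓑) {B₁ B₂ : Finset (Fin n)} (h1 : B₁ ∈ 𝓑) (h2 : B₂ ∈ 𝓑) :
    B₁.card = B₂.card := by
  have := card_inter_const hM (K := Finset.univ) (fun p q _ => by simp) B₁ h1 B₂ h2
  simpa using this

lemma exists_base_subset_union (hM : IsMatroid n 𝓑) {B J : Finset (Fin n)} (hB : B ∈ 𝓑)
    (hJ : mIndep 𝓑 J) : ∃ B' ∈ 𝓑, J ⊆ B' ∧ B' ⊆ B ∪ J := by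
  classical
  set S : Finset (Finset (Fin n)) := 𝓑.filter (fun B' => J ⊆ B') with hS
  have hSne : S.Nonempty := by
    obtain ⟨B0, hB0, hJB0⟩ := hJ
    exact ⟨B0, by simp [hS, hB0, hJB0]⟩
  obtain ⟨B', hB'S, hmin⟩ := S.exists_min_image (fun B' => (B' \ (B ∪ J)).card) hSne
  simp only [hS, Finset.mem_filter] at hB'S
  obtain ⟨hB'𝓑, hJB'⟩ := hB'S
  refine ⟨B', hB'𝓑, hJB', ?_⟩
  by_contra hns
  obtain ⟨i, hiB', hiBJ⟩ : ∃ i ∈ B', i ∉ B ∪ J := by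
    by_contra h
    push_neg at h
    exact hns h
  have hiB : i ∉ B := fun h => hiBJ (Finset.mem_union_left _ h)
  have hiJ : i ∉ J := fun h => hiBJ (Finset.mem_union_right _ h)
  obtain ⟨j, hj, hB''⟩ := hM.2 B' hB'𝓑 B hB i (Finset.mem_sdiff.2 ⟨hiB', hiB⟩)
  have hjB : j ∈ B := (Finset.mem_sdiff.1 hj).1
  have hjB' : j ∉ B' := (Finset.mem_sdiff.1 hj).2
  set B'' := insert j (B'.erase i) with hB''def
  have hJB'' : J ⊆ B'' := fun x hx =>
    Finset.mem_insert_of_mem (Finset.mem_erase.2 ⟨fun h => hiJ (h ▸ hx), hJB' hx⟩)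
  have hB''S : B'' ∈ S := by simp [hS, hB'', hJB'']
  have hset : B'' \ (B ∪ J) = (B' \ (B ∪ J)).erase i := by
    ext p
    simp only [hB''def, Finset.mem_sdiff, Finset.mem_insert, Finset.mem_erase]
    constructor
    · rintro ⟨hp1 | ⟨hpne, hp⟩, hpBJ⟩
      · exact absurd (Finset.mem_union_left _ (hp1 ▸ hjB)) hpBJ
      · exact ⟨hpne, hp, hpBJ⟩
    · rintro ⟨hpne, hp, hpBJ⟩
      exact ⟨Or.inr ⟨hpne, hp⟩, hpBJ⟩
  have hlt : (B'' \ (B ∪ J)).card < (B' \ (B ∪ J)).card := by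
    rw [hset, Finset.card_erase_of_mem (Finset.mem_sdiff.2 ⟨hiB', hiBJ⟩)]
    have : 0 < (B' \ (B ∪ J)).card :=
      Finset.card_pos.2 ⟨i, Finset.mem_sdiff.2 ⟨hiB', hiBJ⟩⟩
    omega
  exact absurd (hmin B'' hB''S) (not_le.2 hlt)

lemma indep_augment (hM : IsMatroid n 𝓑) {I J : Finset (Fin n)} (hI : mIndep 𝓑 I)
    (hJ : mIndep 𝓑 J) (hc : I.card < J.card) :
    ∃ x ∈ J, x ∉ I ∧ mIndep 𝓑 (insert x I) := by
  classical
  obtain ⟨BJ, hBJ, hJBJ⟩ := hJ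
  obtain ⟨B', hB', hIB', hB'sub⟩ := exists_base_subset_union hM hBJ hI
  have hcards : B'.card = BJ.card := card_bases_eq hM hB' hBJ
  have hsub1 : B' \ I ⊆ BJ := by
    intro x hx
    rcases Finset.mem_union.1 (hB'sub (Finset.mem_sdiff.1 hx).1) with h | h
    · exact h
    · exact absurd h (Finset.mem_sdiff.1 hx).2
  have hc1 : (B' \ I).card = B'.card - I.card := Finset.card_sdiff_of_subset hIB'
  have hc2 : (BJ \ J).card = BJ.card - J.card := Finset.card_sdiff_of_subset hJBJ
  have hJle : J.card ≤ BJ.card := Finset.card_le_card hJBJ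
  have hIle : I.card ≤ B'.card := Finset.card_le_card hIB'
  have hlt : (BJ \ J).card < (B' \ I).card := by omega
  obtain ⟨x, hx1, hx2⟩ : ∃ x ∈ B' \ I, x ∉ BJ \ J := by
    by_contra h
    push_neg at h
    exact absurd (Finset.card_le_card h) (not_le.2 hlt)
  have hxB' : x ∈ B' := (Finset.mem_sdiff.1 hx1).1
  have hxI : x ∉ I := (Finset.mem_sdiff.1 hx1).2
  have hxJ : x ∈ J := by
    by_contra hxJ
    exact hx2 (Finset.mem_sdiff.2 ⟨hsub1 hx1, hxJ⟩)
  exact ⟨x, hxJ, hxI, B', hB', Finset.insert_subset hxB' hIB'⟩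

lemma basesRestrict_card_le (hM : IsMatroid n 𝓑) {A I J : Finset (Fin n)}
    (hI : I ∈ basesRestrict 𝓑 A) (hJ : J ∈ basesRestrict 𝓑 A) : I.card ≤ J.card := by
  by_contra hlt
  push_neg at hlt
  obtain ⟨hJA, hJind, hJmax⟩ := mem_basesRestrict.1 hJ
  obtain ⟨hIA, hIind, _⟩ := mem_basesRestrict.1 hI
  obtain ⟨x, hxI, hxJ, hx⟩ := indep_augment hM hJind hIind hlt
  have := hJmax (insert x J) (Finset.insert_subset (hIA hxI) hJA) hx
    (Finset.subset_insert _ _)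
  exact hxJ (this ▸ Finset.mem_insert_self x J)

lemma basesRestrict_card_eq (hM : IsMatroid n 𝓑) {A I J : Finset (Fin n)}
    (hI : I ∈ basesRestrict 𝓑 A) (hJ : J ∈ basesRestrict 𝓑 A) : I.card = J.card :=
  le_antisymm (basesRestrict_card_le hM hI hJ) (basesRestrict_card_le hM hJ hI)

lemma basesRestrict_nonempty (hM : IsMatroid n 𝓑) (A : Finset (Fin n)) :
    (basesRestrict 𝓑 A).Nonempty := by
  obtain ⟨B0, hB0⟩ := hM.1
  obtain ⟨J, hJ, _⟩ := exists_basesRestrict_superset (𝓑 := 𝓑) (A := A) (I := ∅)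
    ⟨B0, hB0, Finset.empty_subset _⟩ (Finset.empty_subset _)
  exact ⟨J, hJ⟩

lemma card_eq_rankOf (hM : IsMatroid n 𝓑) {A I : Finset (Fin n)}
    (hI : I ∈ basesRestrict 𝓑 A) : I.card = rankOf 𝓑 A := by
  refine le_antisymm (Finset.le_sup hI) (Finset.sup_le fun J hJ => ?_)
  exact basesRestrict_card_le hM hJ hI

lemma indep_card_le_rankOf (hM : IsMatroid n 𝓑) {A I : Finset (Fin n)} (hI : mIndep 𝓑 I)
    (hIA : I ⊆ A) : I.card ≤ rankOf 𝓑 A := by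
  obtain ⟨J, hJ, hIJ⟩ := exists_basesRestrict_superset hI hIA
  exact le_trans (Finset.card_le_card hIJ) (le_of_eq (card_eq_rankOf hM hJ))

lemma mem_basesRestrict_of_card (hM : IsMatroid n 𝓑) {A I : Finset (Fin n)} (hIA : I ⊆ A)
    (hI : mIndep 𝓑 I) (hc : I.card = rankOf 𝓑 A) : I ∈ basesRestrict 𝓑 A := by
  refine mem_basesRestrict.2 ⟨hIA, hI, fun J hJA hJind hIJ => ?_⟩
  exact Finset.eq_of_subset_of_card_le hIJ (hc ▸ indep_card_le_rankOf hM hJind hJA)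

lemma basesRestrict_univ (hM : IsMatroid n 𝓑) : basesRestrict 𝓑 Finset.univ = 𝓑 := by
  ext I
  rw [mem_basesRestrict]
  constructor
  · rintro ⟨-, ⟨B, hB, hIB⟩, hmax⟩
    rwa [hmax B (Finset.subset_univ _) ⟨B, hB, Finset.Subset.refl _⟩ hIB]
  · intro hI
    refine ⟨Finset.subset_univ _, ⟨I, hI, Finset.Subset.refl _⟩, fun J _ hJind hIJ => ?_⟩
    obtain ⟨B', hB', hJB'⟩ := hJind
    have h1 : J.card ≤ B'.card := Finset.card_le_card hJB'
    have h2 : B'.card = I.card := card_bases_eq hM hB' hI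
    exact (Finset.eq_of_subset_of_card_le hIJ (h2 ▸ h1)).symm ▸ rfl

lemma isMatroid_basesRestrict (hM : IsMatroid n 𝓑) (A : Finset (Fin n)) :
    IsMatroid n (basesRestrict 𝓑 A) := by
  refine ⟨basesRestrict_nonempty hM A, ?_⟩
  intro B₁ hB₁ B₂ hB₂ i hi
  have hiB₁ : i ∈ B₁ := (Finset.mem_sdiff.1 hi).1
  have hiB₂ : i ∉ B₂ := (Finset.mem_sdiff.1 hi).2
  obtain ⟨hB₁A, hB₁ind, _⟩ := mem_basesRestrict.1 hB₁
  obtain ⟨hB₂A, hB₂ind, _⟩ := mem_basesRestrict.1 hB₂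
  have hcards : B₁.card = B₂.card := basesRestrict_card_eq hM hB₁ hB₂
  have herase_lt : (B₁.erase i).card < B₂.card := by
    rw [Finset.card_erase_of_mem hiB₁]
    have : 0 < B₁.card := Finset.card_pos.2 ⟨i, hiB₁⟩
    omega
  obtain ⟨x, hxB₂, hxerase, hxind⟩ :=
    indep_augment hM (mIndep_mono hB₁ind (Finset.erase_subset _ _)) hB₂ind herase_lt
  have hxB₁ : x ∉ B₁ := by
    intro hxB₁
    have hxi : x ≠ i := fun h => hiB₂ (h ▸ hxB₂)
    exact hxerase (Finset.mem_erase.2 ⟨hxi, hxB₁⟩)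
  refine ⟨x, Finset.mem_sdiff.2 ⟨hxB₂, hxB₁⟩, ?_⟩
  refine mem_basesRestrict_of_card hM ?_ hxind ?_
  · exact Finset.insert_subset (hB₂A hxB₂) ((Finset.erase_subset _ _).trans hB₁A)
  · rw [Finset.card_insert_of_notMem hxerase, Finset.card_erase_of_mem hiB₁,
      ← card_eq_rankOf hM hB₁]
    have : 0 < B₁.card := Finset.card_pos.2 ⟨i, hiB₁⟩
    omega

lemma mIndep_basesRestrict_iff (hM : IsMatroid n 𝓑) {A I : Finset (Fin n)} :
    mIndep (basesRestrict 𝓑 A) I ↔ mIndep 𝓑 I ∧ I ⊆ A := by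
  constructor
  · rintro ⟨J, hJ, hIJ⟩
    obtain ⟨hJA, hJind, _⟩ := mem_basesRestrict.1 hJ
    exact ⟨mIndep_mono hJind hIJ, hIJ.trans hJA⟩
  · rintro ⟨hIind, hIA⟩
    obtain ⟨J, hJ, hIJ⟩ := exists_basesRestrict_superset hIind hIA
    exact ⟨J, hJ, hIJ⟩

lemma basesRestrict_basesRestrict (hM : IsMatroid n 𝓑) {A' A : Finset (Fin n)} (h : A' ⊆ A) :
    basesRestrict (basesRestrict 𝓑 A) A' = basesRestrict 𝓑 A' := by
  ext I
  rw [mem_basesRestrict, mem_basesRestrict]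
  constructor
  · rintro ⟨hIA', hIind, hmax⟩
    obtain ⟨hIind', -⟩ := (mIndep_basesRestrict_iff hM).1 hIind
    refine ⟨hIA', hIind', fun J hJA' hJind hIJ => ?_⟩
    exact hmax J hJA' ((mIndep_basesRestrict_iff hM).2 ⟨hJind, hJA'.trans h⟩) hIJ
  · rintro ⟨hIA', hIind, hmax⟩
    refine ⟨hIA', (mIndep_basesRestrict_iff hM).2 ⟨hIind, hIA'.trans h⟩,
      fun J hJA' hJind hIJ => ?_⟩
    exact hmax J hJA' ((mIndep_basesRestrict_iff hM).1 hJind).1 hIJ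

lemma union_base_of_union_base (hM : IsMatroid n 𝓑) {Y I BA BA' : Finset (Fin n)}
    (hdisj : Disjoint I Y) (hBA : BA ∈ basesRestrict 𝓑 Y) (hBA' : BA' ∈ basesRestrict 𝓑 Y)
    (h : I ∪ BA ∈ 𝓑) : I ∪ BA' ∈ 𝓑 := by
  classical
  obtain ⟨hBAY, hBAind, hBAmax⟩ := mem_basesRestrict.1 hBA
  obtain ⟨hBA'Y, hBA'ind, hBA'max⟩ := mem_basesRestrict.1 hBA'
  obtain ⟨B'', hB'', hsub1, hsub2⟩ := exists_base_subset_union hM h hBA'ind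
  have hB''Y : B'' ∩ Y = BA' := by
    refine (hBA'max (B'' ∩ Y) (Finset.inter_subset_right)
      (mIndep_mono ⟨B'', hB'', Finset.Subset.refl _⟩ Finset.inter_subset_left)
      (Finset.subset_inter hsub1 hBA'Y)).symm
  have hdisjBA : Disjoint I BA := hdisj.mono_right hBAY
  have hBsdiff : B'' \ Y ⊆ I := by
    intro x hx
    obtain ⟨hxB'', hxY⟩ := Finset.mem_sdiff.1 hx
    rcases Finset.mem_union.1 (hsub2 hxB'') with h' | h'
    · rcases Finset.mem_union.1 h' with h'' | h''
      · exact h''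
      · exact absurd (hBAY h'') hxY
    · exact absurd (hBA'Y h') hxY
  have hcard1 : B''.card = I.card + BA.card := by
    rw [card_bases_eq hM hB'' h, Finset.card_union_of_disjoint hdisjBA]
  have hcard2 : B''.card = (B'' \ Y).card + BA'.card := by
    rw [← hB''Y, Finset.card_sdiff_add_card_inter]
  have hcard3 : BA.card = BA'.card := basesRestrict_card_eq hM hBA hBA'
  have hIeq : B'' \ Y = I := Finset.eq_of_subset_of_card_le hBsdiff (by omega) |>.symm ▸ rfl
  have hfin : B'' = I ∪ BA' := by
    rw [← hIeq, ← hB''Y, Finset.sdiff_union_inter]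
  rwa [← hfin]

lemma mem_basesContract {Y I : Finset (Fin n)} :
    I ∈ basesContract 𝓑 Y ↔ Disjoint I Y ∧ ∃ BA ∈ basesRestrict 𝓑 Y, I ∪ BA ∈ 𝓑 := by
  simp [basesContract, Finset.mem_filter, Finset.mem_powerset, Finset.subset_univ]

lemma basesContract_forall (hM : IsMatroid n 𝓑) {Y I : Finset (Fin n)}
    (hI : I ∈ basesContract 𝓑 Y) {BA : Finset (Fin n)} (hBA : BA ∈ basesRestrict 𝓑 Y) :
    I ∪ BA ∈ 𝓑 := by
  obtain ⟨hdisj, BA', hBA', hu⟩ := mem_basesContract.1 hI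
  exact union_base_of_union_base hM hdisj hBA' hBA hu

lemma isMatroid_basesContract (hM : IsMatroid n 𝓑) (Y : Finset (Fin n)) :
    IsMatroid n (basesContract 𝓑 Y) := by
  classical
  constructor
  · obtain ⟨BA, hBA⟩ := basesRestrict_nonempty hM Y
    obtain ⟨hBAY, hBAind, hBAmax⟩ := mem_basesRestrict.1 hBA
    obtain ⟨B'', hB''⟩ : ∃ B'' ∈ basesRestrict 𝓑 Finset.univ, BA ⊆ B'' :=
      exists_basesRestrict_superset hBAind (Finset.subset_univ _)
    obtain ⟨hB''mem, hBAB''⟩ := hB''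
    rw [basesRestrict_univ hM] at hB''mem
    have hB''Y : B'' ∩ Y = BA :=
      (hBAmax (B'' ∩ Y) Finset.inter_subset_right
        (mIndep_mono ⟨B'', hB''mem, Finset.Subset.refl _⟩ Finset.inter_subset_left)
        (Finset.subset_inter hBAB'' hBAY)).symm
    refine ⟨B'' \ Y, mem_basesContract.2 ⟨Finset.sdiff_disjoint, BA, hBA, ?_⟩⟩
    rw [← hB''Y, Finset.sdiff_union_inter]
    exact hB''mem
  · intro I₁ hI₁ I₂ hI₂ i hi
    have hiI₁ : i ∈ I₁ := (Finset.mem_sdiff.1 hi).1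
    have hiI₂ : i ∉ I₂ := (Finset.mem_sdiff.1 hi).2
    obtain ⟨hd₁, -⟩ := mem_basesContract.1 hI₁
    obtain ⟨hd₂, -⟩ := mem_basesContract.1 hI₂
    obtain ⟨BA, hBA⟩ := basesRestrict_nonempty hM Y
    have hBAY : BA ⊆ Y := (mem_basesRestrict.1 hBA).1
    have hB1 : I₁ ∪ BA ∈ 𝓑 := basesContract_forall hM hI₁ hBA
    have hB2 : I₂ ∪ BA ∈ 𝓑 := basesContract_forall hM hI₂ hBA
    have hiY : i ∉ Y := fun h => (Finset.disjoint_left.1 hd₁) hiI₁ h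
    have hiBA : i ∉ BA := fun h => hiY (hBAY h)
    have hi' : i ∈ (I₁ ∪ BA) \ (I₂ ∪ BA) := by
      simp only [Finset.mem_sdiff, Finset.mem_union]
      exact ⟨Or.inl hiI₁, fun h => h.elim hiI₂ hiBA⟩
    obtain ⟨j, hj, hBex⟩ := hM.2 _ hB1 _ hB2 i hi'
    obtain ⟨hjmem, hjnot⟩ := Finset.mem_sdiff.1 hj
    have hjBA : j ∉ BA := fun h => hjnot (Finset.mem_union_right _ h)
    have hjI₂ : j ∈ I₂ := (Finset.mem_union.1 hjmem).resolve_right hjBA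
    have hjI₁ : j ∉ I₁ := fun h => hjnot (Finset.mem_union_left _ h)
    have hjY : j ∉ Y := fun h => (Finset.disjoint_left.1 hd₂) hjI₂ h
    refine ⟨j, Finset.mem_sdiff.2 ⟨hjI₂, hjI₁⟩, ?_⟩
    refine mem_basesContract.2 ⟨?_, BA, hBA, ?_⟩
    · refine Finset.disjoint_left.2 fun x hx hxY => ?_
      rcases Finset.mem_insert.1 hx with rfl | hx'
      · exact hjY hxY
      · exact (Finset.disjoint_left.1 hd₁) (Finset.mem_of_mem_erase hx') hxY
    · have heq : insert j (I₁.erase i) ∪ BA = insert j ((I₁ ∪ BA).erase i) := by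
        rw [Finset.erase_union_distrib, Finset.erase_eq_of_notMem hiBA,
          Finset.insert_union]
      rwa [heq]

end MatroidBasics


/-! ### Flags, the canonical weight vector, and max-weight bases -/

section FlagBasics

variable {n : ℕ}

lemma lv_le_card (C : Finset (Finset (Fin n))) (p : Fin n) : lv C p ≤ C.card :=
  Finset.card_le_card (Finset.filter_subset _ _)

lemma mem_fullChain {C : Finset (Finset (Fin n))} {p : Fin n} {j : ℕ} :
    p ∈ fullChain C j ↔ lv C p < j := by
  simp [fullChain]

lemma fullChain_zero (C : Finset (Finset (Fin n))) : fullChain C 0 = ∅ := by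
  ext p; simp [mem_fullChain]

lemma fullChain_top (C : Finset (Finset (Fin n))) {j : ℕ} (hj : C.card < j) :
    fullChain C j = Finset.univ := by
  ext p
  simp only [mem_fullChain, Finset.mem_univ, iff_true]
  exact lt_of_le_of_lt (lv_le_card C p) hj

lemma fullChain_mono (C : Finset (Finset (Fin n))) {j j' : ℕ} (h : j ≤ j') :
    fullChain C j ⊆ fullChain C j' := fun p hp =>
  mem_fullChain.2 (lt_of_lt_of_le (mem_fullChain.1 hp) h)

lemma mem_block_iff {C : Finset (Finset (Fin n))} {p : Fin n} {j : ℕ} :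
    p ∈ fullChain C (j + 1) \ fullChain C j ↔ lv C p = j := by
  simp only [Finset.mem_sdiff, mem_fullChain]
  omega

lemma lv_lt_of_flag {C : Finset (Finset (Fin n))} (hC : IsFlag n C) {p q : Fin n}
    {A : Finset (Fin n)} (hA : A ∈ C) (hpA : p ∈ A) (hqA : q ∉ A) : lv C p < lv C q := by
  apply Finset.card_lt_card
  rw [Finset.ssubset_iff_of_subset]
  · exact ⟨A, by simp [hA, hqA, hpA]⟩
  · intro A' hA'
    simp only [Finset.mem_filter] at hA' ⊢
    refine ⟨hA'.1, fun hqA' => hA'.2 ?_⟩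
    rcases hC.2 A hA A' hA'.1 with h | h
    · exact h hpA
    · exact absurd (h hqA') hqA

lemma lv_eq_of_same {C : Finset (Finset (Fin n))} {p q : Fin n}
    (h : ∀ A ∈ C, (p ∈ A ↔ q ∈ A)) : lv C p = lv C q := by
  unfold lv
  congr 1
  apply Finset.filter_congr
  intro A hA
  simp [h A hA]

/-- The canonical weight vector of a flag. -/
noncomputable def flagWeight (C : Finset (Finset (Fin n))) : Fin n → ℝ :=
  fun p => (C.card : ℝ) - (lv C p : ℝ)

lemma flagWeight_mem_relint {C : Finset (Finset (Fin n))} (hC : IsFlag n C) :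
    flagWeight C ∈ relintBraidCone C := by
  intro p q
  constructor
  · intro h
    simp only [flagWeight, lv_eq_of_same h]
  · rintro ⟨A, hA, hpA, hqA⟩
    have := lv_lt_of_flag hC hA hpA hqA
    simp only [flagWeight]
    have h1 : (lv C p : ℝ) < (lv C q : ℝ) := by exact_mod_cast this
    linarith

/-- The weight statistic of a subset attached to a flag. -/
noncomputable def gW (C : Finset (Finset (Fin n))) (B : Finset (Fin n)) : ℕ :=
  ∑ j ∈ Finset.range (C.card + 2), (B ∩ fullChain C j).card

lemma dotp_indVec (C : Finset (Finset (Fin n))) (B : Finset (Fin n)) :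
    dotp (flagWeight C) (indVec B) = (gW C B : ℝ) - (B.card : ℝ) := by
  classical
  have h1 : dotp (flagWeight C) (indVec B) = ∑ p ∈ B, flagWeight C p := by
    unfold dotp indVec
    rw [← Finset.sum_filter_add_sum_filter_not Finset.univ (fun p => p ∈ B)]
    have h2 : ∀ p ∈ Finset.univ.filter (fun p => p ∉ B),
        flagWeight C p * (if p ∈ B then (1 : ℝ) else 0) = 0 := by
      intro p hp
      simp only [Finset.mem_filter] at hp
      simp [hp.2]
    rw [Finset.sum_eq_zero h2, add_zero]
    rw [Finset.filter_mem_eq_inter, Finset.univ_inter]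
    apply Finset.sum_congr rfl
    intro p hp
    simp [hp]
  rw [h1]
  have h3 : gW C B = ∑ p ∈ B, (C.card + 1 - lv C p) := by
    unfold gW
    have : ∀ j ∈ Finset.range (C.card + 2), (B ∩ fullChain C j).card
        = ∑ p ∈ B, (if lv C p < j then 1 else 0) := by
      intro j _
      have : B ∩ fullChain C j = B.filter (fun p => lv C p < j) := by
        ext p; simp [mem_fullChain]
      rw [this, Finset.card_filter]
    rw [Finset.sum_congr rfl this, Finset.sum_comm]
    apply Finset.sum_congr rfl
    intro p _
    have hlv : lv C p ≤ C.card := lv_le_card C p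
    have : (Finset.range (C.card + 2)).filter (fun j => lv C p < j)
        = Finset.Ico (lv C p + 1) (C.card + 2) := by
      ext j
      simp only [Finset.mem_filter, Finset.mem_range, Finset.mem_Ico]
      omega
    rw [← Finset.card_filter, this, Nat.card_Ico]
    omega
  rw [h3, Nat.cast_sum]
  have h4 : ∀ p ∈ B, flagWeight C p = ((C.card + 1 - lv C p : ℕ) : ℝ) - 1 := by
    intro p _
    have hlv : lv C p ≤ C.card := lv_le_card C p
    simp only [flagWeight]
    have h5 : lv C p ≤ C.card + 1 := by omega
    rw [Nat.cast_sub h5]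
    push_cast
    ring
  rw [Finset.sum_congr rfl h4, Finset.sum_sub_distrib, Finset.sum_const, nsmul_eq_mul,
    mul_one]

lemma gW_le {𝓑 : Finset (Finset (Fin n))} (hM : IsMatroid n 𝓑) (C : Finset (Finset (Fin n)))
    {B : Finset (Fin n)} (hB : B ∈ 𝓑) :
    gW C B ≤ ∑ j ∈ Finset.range (C.card + 2), rankOf 𝓑 (fullChain C j) := by
  apply Finset.sum_le_sum
  intro j _
  exact indep_card_le_rankOf hM (mIndep_mono ⟨B, hB, Finset.Subset.refl _⟩
    Finset.inter_subset_left) Finset.inter_subset_right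

lemma mem_flagQuotBases_iff_gW {𝓑 : Finset (Finset (Fin n))} (hM : IsMatroid n 𝓑)
    (C : Finset (Finset (Fin n))) {B : Finset (Fin n)} (hB : B ∈ 𝓑) :
    B ∈ flagQuotBases 𝓑 C ↔
      gW C B = ∑ j ∈ Finset.range (C.card + 2), rankOf 𝓑 (fullChain C j) := by
  simp only [flagQuotBases, Finset.mem_filter]
  constructor
  · rintro ⟨-, h⟩
    exact Finset.sum_congr rfl h
  · intro h
    refine ⟨hB, ?_⟩
    by_contra hne
    push_neg at hne
    obtain ⟨j₀, hj₀mem, hj₀⟩ := hne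
    have hle : ∀ j ∈ Finset.range (C.card + 2),
        (B ∩ fullChain C j).card ≤ rankOf 𝓑 (fullChain C j) := fun j _ =>
      indep_card_le_rankOf hM (mIndep_mono ⟨B, hB, Finset.Subset.refl _⟩
        Finset.inter_subset_left) Finset.inter_subset_right
    have hstrict : gW C B < ∑ j ∈ Finset.range (C.card + 2), rankOf 𝓑 (fullChain C j) :=
      Finset.sum_lt_sum hle ⟨j₀, hj₀mem, lt_of_le_of_ne (hle j₀ hj₀mem) hj₀⟩
    omega

/-- Existence of a basis adapted to the flag. -/
lemma flagQuotBases_nonempty {𝓑 : Finset (Finset (Fin n))} (hM : IsMatroid n 𝓑)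
    (C : Finset (Finset (Fin n))) : (flagQuotBases 𝓑 C).Nonempty := by
  classical
  have key : ∀ m : ℕ, ∃ I ∈ basesRestrict 𝓑 (fullChain C m),
      ∀ j ≤ m, I ∩ fullChain C j ∈ basesRestrict 𝓑 (fullChain C j) := by
    intro m
    induction m with
    | zero =>
      obtain ⟨B0, hB0⟩ := hM.1
      have hempty : (∅ : Finset (Fin n)) ∈ basesRestrict 𝓑 (fullChain C 0) := by
        rw [fullChain_zero]
        exact mem_basesRestrict.2 ⟨Finset.Subset.refl _, ⟨B0, hB0, Finset.empty_subset _⟩,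
          fun J hJ _ _ => (Finset.subset_empty.1 hJ).symm⟩
      refine ⟨∅, hempty, fun j hj => ?_⟩
      interval_cases j
      simpa using hempty
    | succ m ihm =>
      obtain ⟨Im, hIm, hImall⟩ := ihm
      obtain ⟨hImsub, hImind, -⟩ := mem_basesRestrict.1 hIm
      obtain ⟨I, hI, hImI⟩ := exists_basesRestrict_superset hImind
        (hImsub.trans (fullChain_mono C (Nat.le_succ m)))
      refine ⟨I, hI, fun j hj => ?_⟩
      obtain ⟨hIsub, hIind, -⟩ := mem_basesRestrict.1 hI
      rcases Nat.eq_or_lt_of_le hj with rfl | hjm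
      · rwa [Finset.inter_eq_left.2 hIsub]
      have hjm' : j ≤ m := by omega
      have hIFm : I ∩ fullChain C m = Im := by
        have h1 : Im ⊆ I ∩ fullChain C m := Finset.subset_inter hImI hImsub
        have h2 := hImall m le_rfl
        rw [Finset.inter_eq_left.2 hImsub] at h2
        obtain ⟨-, -, hmax⟩ := mem_basesRestrict.1 h2
        exact (hmax (I ∩ fullChain C m) Finset.inter_subset_right
          (mIndep_mono hIind Finset.inter_subset_left) h1).symm
      have : I ∩ fullChain C j = Im ∩ fullChain C j := by
        rw [← hIFm, Finset.inter_assoc, Finset.inter_comm (fullChain C m),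
          ← Finset.inter_assoc, Finset.inter_assoc]
        congr 1
        rw [Finset.inter_eq_left.2 (fullChain_mono C hjm')]
      rw [this]
      exact hImall j hjm'
  obtain ⟨I, hI, hIall⟩ := key (C.card + 1)
  rw [fullChain_top C (by omega), basesRestrict_univ hM] at hI
  refine ⟨I, ?_⟩
  simp only [flagQuotBases, Finset.mem_filter]
  refine ⟨hI, fun j hj => ?_⟩
  rw [Finset.mem_range] at hj
  exact card_eq_rankOf hM (hIall j (by omega))

end FlagBasics


/-! ### Faces of polytopes as convex hulls of maximizing vertices -/

section PolytopeFace

variable {n : ℕ}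

lemma dotp_sum {ι : Type*} (s : Finset ι) (ω : Fin n → ℝ) (f : ι → (Fin n → ℝ)) :
    dotp ω (∑ v ∈ s, f v) = ∑ v ∈ s, dotp ω (f v) := by
  unfold dotp
  rw [Finset.sum_comm]
  apply Finset.sum_congr rfl
  intro i _
  rw [Finset.sum_apply, Finset.mul_sum]

lemma dotp_smul (ω : Fin n → ℝ) (c : ℝ) (x : Fin n → ℝ) :
    dotp ω (c • x) = c * dotp ω x := by
  unfold dotp
  rw [Finset.mul_sum]
  apply Finset.sum_congr rfl
  intro i _
  simp [Pi.smul_apply, smul_eq_mul]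
  ring

lemma dotp_centerMass (V : Finset (Fin n → ℝ)) (ω : Fin n → ℝ) (w : (Fin n → ℝ) → ℝ)
    (hw : ∑ v ∈ V, w v = 1) :
    dotp ω (V.centerMass w id) = ∑ v ∈ V, w v * dotp ω v := by
  rw [Finset.centerMass_eq_of_sum_1 _ _ hw, dotp_sum]
  apply Finset.sum_congr rfl
  intro v _
  exact dotp_smul ω (w v) v

lemma argmaxSet_convexHull (V : Finset (Fin n → ℝ)) (hV : V.Nonempty) (ω : Fin n → ℝ) :
    argmaxSet (convexHull ℝ (V : Set (Fin n → ℝ))) ω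
      = convexHull ℝ ((V.filter (fun v => dotp ω v = V.sup' hV (dotp ω)) : Finset (Fin n → ℝ)) :
          Set (Fin n → ℝ)) := by
  classical
  set m := V.sup' hV (dotp ω) with hm
  have hle : ∀ v ∈ V, dotp ω v ≤ m := fun v hv => Finset.le_sup' (dotp ω) hv
  have hub : ∀ x ∈ convexHull ℝ (V : Set (Fin n → ℝ)), dotp ω x ≤ m := by
    intro x hx
    obtain ⟨w, hw0, hw1, hwx⟩ := (Finset.mem_convexHull).1 hx
    rw [← hwx, dotp_centerMass V ω w hw1]
    calc ∑ v ∈ V, w v * dotp ω v ≤ ∑ v ∈ V, w v * m := by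
          apply Finset.sum_le_sum
          intro v hv
          exact mul_le_mul_of_nonneg_left (hle v hv) (hw0 v hv)
      _ = m := by rw [← Finset.sum_mul, hw1, one_mul]
  obtain ⟨v₀, hv₀V, hv₀⟩ := Finset.exists_mem_eq_sup' hV (dotp ω)
  have hv₀hull : v₀ ∈ convexHull ℝ (V : Set (Fin n → ℝ)) :=
    subset_convexHull ℝ _ hv₀V
  ext x
  constructor
  · rintro ⟨hxhull, hxmax⟩
    obtain ⟨w, hw0, hw1, hwx⟩ := (Finset.mem_convexHull).1 hxhull
    have hxm : dotp ω x = m := by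
      refine le_antisymm (hub x hxhull) ?_
      rw [← hm] at hv₀
      rw [hv₀]
      exact hxmax v₀ hv₀hull
    have hsum0 : ∑ v ∈ V, w v * (m - dotp ω v) = 0 := by
      have hexp : ∑ v ∈ V, w v * (m - dotp ω v)
          = (∑ v ∈ V, w v * m) - ∑ v ∈ V, w v * dotp ω v := by
        rw [← Finset.sum_sub_distrib]
        exact Finset.sum_congr rfl (fun v _ => by ring)
      rw [hexp, ← Finset.sum_mul, hw1, one_mul, ← dotp_centerMass V ω w hw1, hwx, hxm,
        sub_self]
    have hzero : ∀ v ∈ V, w v * (m - dotp ω v) = 0 := by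
      intro v hv
      have := (Finset.sum_eq_zero_iff_of_nonneg (fun v hv =>
        mul_nonneg (hw0 v hv) (sub_nonneg.2 (hle v hv)))).1 hsum0
      exact this v hv
    have hoff : ∀ v ∈ V, v ∉ V.filter (fun v => dotp ω v = m) → w v = 0 := by
      intro v hv hvf
      have hne : dotp ω v ≠ m := by
        intro h
        exact hvf (Finset.mem_filter.2 ⟨hv, h⟩)
      have := hzero v hv
      rcases mul_eq_zero.1 this with h | h
      · exact h
      · exact absurd (by linarith [sub_eq_zero.1 h] : dotp ω v = m) hne
    rw [Finset.mem_convexHull]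
    refine ⟨w, fun v hv => hw0 v (Finset.filter_subset _ _ hv), ?_, ?_⟩
    · have hside : ∀ v ∈ V, w v ≠ 0 → dotp ω v = m := by
        intro v hv hwv
        by_contra hne
        exact hwv (hoff v hv (fun hmem => hne (Finset.mem_filter.1 hmem).2))
      rw [Finset.sum_filter_of_ne hside]
      exact hw1
    · rw [← hwx]
      exact (Finset.centerMass_subset id (Finset.filter_subset _ _) hoff)
  · intro hx
    have hsub : x ∈ convexHull ℝ (V : Set (Fin n → ℝ)) :=
      convexHull_mono (by exact_mod_cast Finset.filter_subset _ _) hx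
    refine ⟨hsub, ?_⟩
    intro y hy
    have hxm : dotp ω x = m := by
      obtain ⟨w, hw0, hw1, hwx⟩ := (Finset.mem_convexHull).1 hx
      rw [← hwx, dotp_centerMass _ ω w hw1]
      have : ∀ v ∈ V.filter (fun v => dotp ω v = m), w v * dotp ω v = w v * m := by
        intro v hv
        rw [(Finset.mem_filter.1 hv).2]
      rw [Finset.sum_congr rfl this, ← Finset.sum_mul, hw1, one_mul]
    rw [hxm]
    exact hub y hy

end PolytopeFace


/-! ### Identification of the face attached to a flag -/

section FaceIdent

variable {n : ℕ} {𝓑 : Finset (Finset (Fin n))}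

lemma flagQuotBases_subset (C : Finset (Finset (Fin n))) : flagQuotBases 𝓑 C ⊆ 𝓑 := by
  intro B hB
  simp only [flagQuotBases, Finset.mem_filter] at hB
  exact hB.1

lemma card_base_eq_rank_univ (hM : IsMatroid n 𝓑) {B : Finset (Fin n)} (hB : B ∈ 𝓑) :
    B.card = rankOf 𝓑 Finset.univ := by
  apply card_eq_rankOf hM
  rw [basesRestrict_univ hM]
  exact hB

lemma argmax_basePoly (hM : IsMatroid n 𝓑) (C : Finset (Finset (Fin n))) :
    argmaxSet (basePoly 𝓑) (flagWeight C)
      = convexHull ℝ (indVec '' ((flagQuotBases 𝓑 C : Finset (Finset (Fin n))) :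
          Set (Finset (Fin n)))) := by
  classical
  set ω := flagWeight C with hω
  set V : Finset (Fin n → ℝ) := 𝓑.image indVec with hV
  have hVne : V.Nonempty := Finset.image_nonempty.2 hM.1
  have hbp : basePoly 𝓑 = convexHull ℝ (V : Set (Fin n → ℝ)) := by
    rw [basePoly, hV, Finset.coe_image]
  set S : ℕ := ∑ j ∈ Finset.range (C.card + 2), rankOf 𝓑 (fullChain C j) with hS
  set r : ℕ := rankOf 𝓑 Finset.univ with hr
  have hub : ∀ v ∈ V, dotp ω v ≤ (S : ℝ) - r := by
    intro v hv
    obtain ⟨B, hB, rfl⟩ := Finset.mem_image.1 hv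
    rw [hω, dotp_indVec, card_base_eq_rank_univ hM hB]
    have := gW_le hM C hB
    have h1 : (gW C B : ℝ) ≤ (S : ℝ) := by exact_mod_cast this
    linarith
  obtain ⟨B₁, hB₁⟩ := flagQuotBases_nonempty hM C
  have hB₁𝓑 : B₁ ∈ 𝓑 := flagQuotBases_subset C hB₁
  have hB₁gW : gW C B₁ = S := (mem_flagQuotBases_iff_gW hM C hB₁𝓑).1 hB₁
  have hex : dotp ω (indVec B₁) = (S : ℝ) - r := by
    rw [hω, dotp_indVec, hB₁gW, card_base_eq_rank_univ hM hB₁𝓑]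
  have hm : V.sup' hVne (dotp ω) = (S : ℝ) - r := by
    refine le_antisymm (Finset.sup'_le _ _ hub) ?_
    rw [← hex]
    exact Finset.le_sup' (dotp ω) (Finset.mem_image_of_mem indVec hB₁𝓑)
  have hfilter : V.filter (fun v => dotp ω v = V.sup' hVne (dotp ω))
      = (flagQuotBases 𝓑 C).image indVec := by
    ext v
    rw [Finset.mem_filter, hm]
    constructor
    · rintro ⟨hvV, hd⟩
      obtain ⟨B, hB, rfl⟩ := Finset.mem_image.1 hvV
      refine Finset.mem_image_of_mem indVec ?_
      rw [mem_flagQuotBases_iff_gW hM C hB, ← hS]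
      rw [hω, dotp_indVec, card_base_eq_rank_univ hM hB] at hd
      have : (gW C B : ℝ) = (S : ℝ) := by linarith
      exact_mod_cast this
    · intro hv
      obtain ⟨B, hBQ, rfl⟩ := Finset.mem_image.1 hv
      have hB : B ∈ 𝓑 := flagQuotBases_subset C hBQ
      refine ⟨Finset.mem_image_of_mem indVec hB, ?_⟩
      rw [hω, dotp_indVec, card_base_eq_rank_univ hM hB,
        (mem_flagQuotBases_iff_gW hM C hB).1 hBQ]
  rw [hbp, argmaxSet_convexHull V hVne ω, hfilter, Finset.coe_image]

lemma pdim_faceOf_eq (hM : IsMatroid n 𝓑) {C : Finset (Finset (Fin n))} (hC : IsFlag n C)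
    (faceOf : Finset (Finset (Fin n)) → Set (Fin n → ℝ))
    (hface : ∀ ω ∈ relintBraidCone C, argmaxSet (basePoly 𝓑) ω = faceOf C) :
    pdim (faceOf C) = Module.finrank ℝ
      (vectorSpan ℝ (indVec '' ((flagQuotBases 𝓑 C : Finset (Finset (Fin n))) :
        Set (Finset (Fin n))))) := by
  have h1 : faceOf C = convexHull ℝ (indVec '' ((flagQuotBases 𝓑 C :
      Finset (Finset (Fin n))) : Set (Finset (Fin n)))) := by
    rw [← hface (flagWeight C) (flagWeight_mem_relint hC), argmax_basePoly hM C]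
  have h2 : vectorSpan ℝ (convexHull ℝ (indVec '' ((flagQuotBases 𝓑 C :
      Finset (Finset (Fin n))) : Set (Finset (Fin n)))))
      = vectorSpan ℝ (indVec '' ((flagQuotBases 𝓑 C : Finset (Finset (Fin n))) :
        Set (Finset (Fin n)))) := by
    rw [← direction_affineSpan, ← direction_affineSpan, affineSpan_convexHull]
  rw [pdim, h1, h2]

end FaceIdent


/-! ### Minors along a flag and the decomposition of flag-quotient bases -/

section Minors

variable {n : ℕ} {𝓑 : Finset (Finset (Fin n))}

lemma mem_minorBases (hM : IsMatroid n 𝓑) (C : Finset (Finset (Fin n))) {j : ℕ}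
    {D : Finset (Fin n)} :
    D ∈ minorBases 𝓑 (fullChain C (j + 1)) (fullChain C j) ↔
      Disjoint D (fullChain C j) ∧ ∃ BA ∈ basesRestrict 𝓑 (fullChain C j),
        D ∪ BA ∈ basesRestrict 𝓑 (fullChain C (j + 1)) := by
  rw [minorBases, mem_basesContract,
    basesRestrict_basesRestrict hM (fullChain_mono C (Nat.le_succ j))]

lemma isMatroid_minorBases (hM : IsMatroid n 𝓑) (C : Finset (Finset (Fin n))) (j : ℕ) :
    IsMatroid n (minorBases 𝓑 (fullChain C (j + 1)) (fullChain C j)) :=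
  isMatroid_basesContract (isMatroid_basesRestrict hM _) _

lemma minorBases_subset_block (hM : IsMatroid n 𝓑) (C : Finset (Finset (Fin n))) {j : ℕ}
    {D : Finset (Fin n)} (hD : D ∈ minorBases 𝓑 (fullChain C (j + 1)) (fullChain C j)) :
    D ⊆ fullChain C (j + 1) \ fullChain C j := by
  obtain ⟨hdisj, BA, hBA, hU⟩ := (mem_minorBases hM C).1 hD
  have hsub : D ⊆ fullChain C (j + 1) :=
    (Finset.subset_union_left).trans (mem_basesRestrict.1 hU).1
  intro p hp
  exact Finset.mem_sdiff.2 ⟨hsub hp, fun h => Finset.disjoint_left.1 hdisj hp h⟩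

lemma flagQuot_inter_mem (hM : IsMatroid n 𝓑) (C : Finset (Finset (Fin n)))
    {B : Finset (Fin n)} (hB : B ∈ flagQuotBases 𝓑 C) {i : ℕ} (hi : i ≤ C.card + 1) :
    B ∩ fullChain C i ∈ basesRestrict 𝓑 (fullChain C i) := by
  have hB𝓑 : B ∈ 𝓑 := flagQuotBases_subset C hB
  have hcard : (B ∩ fullChain C i).card = rankOf 𝓑 (fullChain C i) := by
    have := hB
    simp only [flagQuotBases, Finset.mem_filter] at this
    exact this.2 i (Finset.mem_range.2 (by omega))
  exact mem_basesRestrict_of_card hM Finset.inter_subset_right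
    (mIndep_mono ⟨B, hB𝓑, Finset.Subset.refl _⟩ Finset.inter_subset_left) hcard

/-- Direction 1 of the decomposition: each block part of a flag-quotient basis is a basis of the
corresponding minor. -/
lemma flagQuot_block_mem_minor (hM : IsMatroid n 𝓑) (C : Finset (Finset (Fin n)))
    {B : Finset (Fin n)} (hB : B ∈ flagQuotBases 𝓑 C) {j : ℕ} (hj : j ≤ C.card) :
    B ∩ (fullChain C (j + 1) \ fullChain C j)
      ∈ minorBases 𝓑 (fullChain C (j + 1)) (fullChain C j) := by
  rw [mem_minorBases hM C]
  constructor
  · exact Finset.disjoint_left.2 fun p hp hpF =>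
      (Finset.mem_sdiff.1 (Finset.mem_inter.1 hp).2).2 hpF
  · refine ⟨B ∩ fullChain C j, flagQuot_inter_mem hM C hB (by omega), ?_⟩
    have heq : B ∩ (fullChain C (j + 1) \ fullChain C j) ∪ B ∩ fullChain C j
        = B ∩ fullChain C (j + 1) := by
      ext p
      simp only [Finset.mem_union, Finset.mem_inter, Finset.mem_sdiff]
      have := fullChain_mono C (Nat.le_succ j) (x := p)
      constructor
      · rintro (⟨h1, h2, -⟩ | ⟨h1, h2⟩)
        · exact ⟨h1, h2⟩
        · exact ⟨h1, this h2⟩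
      · rintro ⟨h1, h2⟩
        by_cases hpj : p ∈ fullChain C j
        · exact Or.inr ⟨h1, hpj⟩
        · exact Or.inl ⟨h1, h2, hpj⟩
    rw [heq]
    exact flagQuot_inter_mem hM C hB (by omega)

/-- Direction 2 of the decomposition: swapping the block part of a flag-quotient basis with any
other basis of the corresponding minor yields a flag-quotient basis. -/
lemma flagQuot_swap (hM : IsMatroid n 𝓑) (C : Finset (Finset (Fin n)))
    {B : Finset (Fin n)} (hB : B ∈ flagQuotBases 𝓑 C) {j : ℕ} (hj : j ≤ C.card)
    {D : Finset (Fin n)} (hD : D ∈ minorBases 𝓑 (fullChain C (j + 1)) (fullChain C j)) :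
    (B \ (fullChain C (j + 1) \ fullChain C j)) ∪ D ∈ flagQuotBases 𝓑 C := by
  classical
  have hB𝓑 : B ∈ 𝓑 := flagQuotBases_subset C hB
  set Fj := fullChain C j with hFj
  set Fj1 := fullChain C (j + 1) with hFj1
  have hmono : Fj ⊆ Fj1 := fullChain_mono C (Nat.le_succ j)
  obtain ⟨hDdisj, BA, hBA, hU⟩ := (mem_minorBases hM C).1 hD
  have hDblk : D ⊆ Fj1 \ Fj := minorBases_subset_block hM C hD
  -- `E := D ∪ (B ∩ Fj)` is a basis of the restriction to `Fj1`
  have hBFj : B ∩ Fj ∈ basesRestrict 𝓑 Fj := flagQuot_inter_mem hM C hB (by omega)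
  have hBFj1 : B ∩ Fj1 ∈ basesRestrict 𝓑 Fj1 := flagQuot_inter_mem hM C hB (by omega)
  have hM' : IsMatroid n (basesRestrict 𝓑 Fj1) := isMatroid_basesRestrict hM Fj1
  have hBA' : BA ∈ basesRestrict (basesRestrict 𝓑 Fj1) Fj := by
    rwa [basesRestrict_basesRestrict hM hmono]
  have hBFj' : B ∩ Fj ∈ basesRestrict (basesRestrict 𝓑 Fj1) Fj := by
    rwa [basesRestrict_basesRestrict hM hmono]
  have hE : D ∪ (B ∩ Fj) ∈ basesRestrict 𝓑 Fj1 :=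
    union_base_of_union_base hM' hDdisj hBA' hBFj' hU
  -- the swapped set is a basis of `𝓑`
  have hBc : B \ Fj1 ∈ basesContract 𝓑 Fj1 :=
    mem_basesContract.2 ⟨Finset.sdiff_disjoint, B ∩ Fj1, hBFj1,
      by rw [Finset.sdiff_union_inter]; exact hB𝓑⟩
  have hB' : (B \ Fj1) ∪ (D ∪ (B ∩ Fj)) ∈ 𝓑 := basesContract_forall hM hBc hE
  have heq : (B \ (Fj1 \ Fj)) ∪ D = (B \ Fj1) ∪ (D ∪ (B ∩ Fj)) := by
    ext p
    simp only [Finset.mem_union, Finset.mem_sdiff, Finset.mem_inter]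
    tauto
  rw [heq]
  simp only [flagQuotBases, Finset.mem_filter]
  refine ⟨hB', fun i hi => ?_⟩
  rw [Finset.mem_range] at hi
  have hBcard : ∀ i' ∈ Finset.range (C.card + 2),
      (B ∩ fullChain C i').card = rankOf 𝓑 (fullChain C i') := by
    have := hB
    simp only [flagQuotBases, Finset.mem_filter] at this
    exact this.2
  rcases le_or_gt i j with hij | hij
  · -- low blocks are unchanged
    have hFiFj : fullChain C i ⊆ Fj := fullChain_mono C hij
    have hset : ((B \ Fj1) ∪ (D ∪ (B ∩ Fj))) ∩ fullChain C i = B ∩ fullChain C i := by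
      ext p
      simp only [Finset.mem_inter, Finset.mem_union, Finset.mem_sdiff]
      constructor
      · rintro ⟨h1 | (hD2 | h3), hFi⟩
        · exact ⟨h1.1, hFi⟩
        · exact absurd (hFiFj hFi) (Finset.disjoint_left.1 hDdisj hD2)
        · exact ⟨h3.1, hFi⟩
      · rintro ⟨hBp, hFi⟩
        by_cases hp1 : p ∈ Fj1
        · exact ⟨Or.inr (Or.inr ⟨hBp, hFiFj hFi⟩), hFi⟩
        · exact ⟨Or.inl ⟨hBp, hp1⟩, hFi⟩
    rw [hset]
    exact hBcard i (Finset.mem_range.2 hi)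
  · -- high blocks: cardinality is preserved
    have hFj1Fi : Fj1 ⊆ fullChain C i := fullChain_mono C hij
    have hset : ((B \ Fj1) ∪ (D ∪ (B ∩ Fj))) ∩ fullChain C i
        = ((B ∩ fullChain C i) \ Fj1) ∪ (D ∪ (B ∩ Fj)) := by
      ext p
      simp only [Finset.mem_inter, Finset.mem_union, Finset.mem_sdiff]
      constructor
      · rintro ⟨h1 | h2, hFi⟩
        · exact Or.inl ⟨⟨h1.1, hFi⟩, h1.2⟩
        · exact Or.inr h2
      · rintro (⟨⟨hBp, hFi⟩, hp1⟩ | h2)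
        · exact ⟨Or.inl ⟨hBp, hp1⟩, hFi⟩
        · refine ⟨Or.inr h2, ?_⟩
          rcases h2 with hD2 | h3
          · exact hFj1Fi (Finset.mem_sdiff.1 (hDblk hD2)).1
          · exact hFj1Fi (hmono h3.2)
    rw [hset]
    have hEsub : D ∪ (B ∩ Fj) ⊆ Fj1 := (mem_basesRestrict.1 hE).1
    have hdisj2 : Disjoint ((B ∩ fullChain C i) \ Fj1) (D ∪ (B ∩ Fj)) :=
      Finset.disjoint_left.2 fun p hp hpE =>
        (Finset.mem_sdiff.1 hp).2 (hEsub hpE)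
    rw [Finset.card_union_of_disjoint hdisj2]
    have hinter : (B ∩ fullChain C i) ∩ Fj1 = B ∩ Fj1 := by
      rw [Finset.inter_assoc, Finset.inter_eq_right.2 hFj1Fi]
    have hsplit : ((B ∩ fullChain C i) \ Fj1).card + (B ∩ Fj1).card
        = (B ∩ fullChain C i).card := by
      rw [← hinter]
      exact Finset.card_sdiff_add_card_inter _ _
    have hEcard : (D ∪ (B ∩ Fj)).card = (B ∩ Fj1).card :=
      basesRestrict_card_eq hM hE hBFj1
    have hgoal : (B ∩ fullChain C i).card = rankOf 𝓑 (fullChain C i) :=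
      hBcard i (Finset.mem_range.2 hi)
    omega

end Minors


/-! ### Connected components of the minors along a flag -/

section Components

variable {n : ℕ}

/-- The component class of a point: points in the same block with the same component of the
corresponding minor. -/
noncomputable def Kc (𝓑 C : Finset (Finset (Fin n))) (p : Fin n) : Finset (Fin n) :=
  Finset.univ.filter (fun q => lv C q = lv C p ∧
    Quot.mk (mRel (minorBases 𝓑 (fullChain C (lv C p + 1)) (fullChain C (lv C p)))) q
      = Quot.mk (mRel (minorBases 𝓑 (fullChain C (lv C p + 1)) (fullChain C (lv C p)))) p)

lemma mem_Kc {𝓑 C : Finset (Finset (Fin n))} {p q : Fin n} :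
    q ∈ Kc 𝓑 C p ↔ lv C q = lv C p ∧
      Quot.mk (mRel (minorBases 𝓑 (fullChain C (lv C p + 1)) (fullChain C (lv C p)))) q
        = Quot.mk (mRel (minorBases 𝓑 (fullChain C (lv C p + 1)) (fullChain C (lv C p)))) p := by
  simp [Kc]

lemma mem_Kc_self {𝓑 C : Finset (Finset (Fin n))} (p : Fin n) : p ∈ Kc 𝓑 C p :=
  mem_Kc.2 ⟨rfl, rfl⟩

lemma Kc_nonempty (𝓑 C : Finset (Finset (Fin n))) (p : Fin n) : (Kc 𝓑 C p).Nonempty :=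
  ⟨p, mem_Kc_self p⟩

lemma Kc_eq_of_mem {𝓑 C : Finset (Finset (Fin n))} {p q : Fin n} (h : q ∈ Kc 𝓑 C p) :
    Kc 𝓑 C q = Kc 𝓑 C p := by
  obtain ⟨hlv, hq⟩ := mem_Kc.1 h
  ext r
  rw [mem_Kc, mem_Kc, hlv]
  constructor
  · rintro ⟨h1, h2⟩
    exact ⟨h1, h2.trans hq⟩
  · rintro ⟨h1, h2⟩
    exact ⟨h1, h2.trans hq.symm⟩

/-- The representative of the component class of a point. -/
noncomputable def repP (𝓑 C : Finset (Finset (Fin n))) (p : Fin n) : Fin n :=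
  (Kc 𝓑 C p).min' (Kc_nonempty 𝓑 C p)

lemma min'_congr' {s t : Finset (Fin n)} (h : s = t) (hs : s.Nonempty) (ht : t.Nonempty) :
    s.min' hs = t.min' ht := by subst h; rfl

lemma repP_mem_Kc (𝓑 C : Finset (Finset (Fin n))) (p : Fin n) : repP 𝓑 C p ∈ Kc 𝓑 C p :=
  Finset.min'_mem _ _

lemma Kc_repP (𝓑 C : Finset (Finset (Fin n))) (p : Fin n) : Kc 𝓑 C (repP 𝓑 C p) = Kc 𝓑 C p :=
  Kc_eq_of_mem (repP_mem_Kc 𝓑 C p)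

lemma repP_idem (𝓑 C : Finset (Finset (Fin n))) (p : Fin n) :
    repP 𝓑 C (repP 𝓑 C p) = repP 𝓑 C p :=
  min'_congr' (Kc_repP 𝓑 C p) _ _

lemma lv_repP (𝓑 C : Finset (Finset (Fin n))) (p : Fin n) :
    lv C (repP 𝓑 C p) = lv C p := (mem_Kc.1 (repP_mem_Kc 𝓑 C p)).1

lemma quot_repP (𝓑 C : Finset (Finset (Fin n))) (p : Fin n) :
    Quot.mk (mRel (minorBases 𝓑 (fullChain C (lv C p + 1)) (fullChain C (lv C p))))
        (repP 𝓑 C p)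
      = Quot.mk (mRel (minorBases 𝓑 (fullChain C (lv C p + 1)) (fullChain C (lv C p)))) p :=
  (mem_Kc.1 (repP_mem_Kc 𝓑 C p)).2

lemma mem_Kc_iff_repP {𝓑 C : Finset (Finset (Fin n))} {p q : Fin n} :
    q ∈ Kc 𝓑 C p ↔ repP 𝓑 C q = repP 𝓑 C p := by
  constructor
  · intro h
    exact min'_congr' (Kc_eq_of_mem h) _ _
  · intro h
    have : Kc 𝓑 C q = Kc 𝓑 C p := by
      rw [← Kc_repP 𝓑 C q, h, Kc_repP]
    rw [← this]
    exact mem_Kc_self q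

lemma cOn_block_eq (𝓑 C : Finset (Finset (Fin n))) (j : ℕ) :
    cOn (fullChain C (j + 1) \ fullChain C j)
        (minorBases 𝓑 (fullChain C (j + 1)) (fullChain C j))
      = (Finset.univ.filter (fun p => lv C p = j ∧ repP 𝓑 C p = p)).card := by
  classical
  set blk := fullChain C (j + 1) \ fullChain C j with hblk
  set Q : Fin n → Quot (mRel (minorBases 𝓑 (fullChain C (j + 1)) (fullChain C j))) :=
    Quot.mk _ with hQ
  have h1 : cOn blk (minorBases 𝓑 (fullChain C (j + 1)) (fullChain C j))
      = (blk.image Q).card := by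
    rw [cOn, ← Finset.coe_image, Set.ncard_coe_finset]
  rw [h1]
  set Fx := Finset.univ.filter (fun p => lv C p = j ∧ repP 𝓑 C p = p) with hFx
  have himg : blk.image Q = Fx.image Q := by
    apply Finset.Subset.antisymm
    · intro v hv
      obtain ⟨p, hp, rfl⟩ := Finset.mem_image.1 hv
      have hlvp : lv C p = j := mem_block_iff.1 hp
      have hq := quot_repP 𝓑 C p
      rw [hlvp] at hq
      refine Finset.mem_image.2 ⟨repP 𝓑 C p, ?_, hq⟩
      rw [hFx, Finset.mem_filter]
      exact ⟨Finset.mem_univ _, by rw [lv_repP, hlvp], repP_idem 𝓑 C p⟩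
    · intro v hv
      obtain ⟨p, hp, rfl⟩ := Finset.mem_image.1 hv
      rw [hFx, Finset.mem_filter] at hp
      exact Finset.mem_image.2 ⟨p, mem_block_iff.2 hp.2.1, rfl⟩
  rw [himg]
  apply Finset.card_image_of_injOn
  intro p hp q hq hpq
  simp only [hFx, Finset.mem_coe, Finset.mem_filter] at hp hq
  have hKc : p ∈ Kc 𝓑 C q := by
    rw [mem_Kc, hq.2.1, hp.2.1]
    exact ⟨rfl, hpq⟩
  have := mem_Kc_iff_repP.1 hKc
  rw [hp.2.2, hq.2.2] at this
  exact this

lemma rkM_eq_card_nonfix (𝓑 C : Finset (Finset (Fin n))) :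
    rkM 𝓑 C = (Finset.univ.filter (fun p => repP 𝓑 C p ≠ p)).card := by
  classical
  rw [rkM]
  have hterm : ∀ j ∈ Finset.range (C.card + 1),
      (fullChain C (j + 1)).card - (fullChain C j).card -
          cOn ((fullChain C (j + 1)) \ (fullChain C j))
            (minorBases 𝓑 (fullChain C (j + 1)) (fullChain C j))
        = (Finset.univ.filter (fun p => lv C p = j ∧ repP 𝓑 C p ≠ p)).card := by
    intro j _
    rw [cOn_block_eq]
    have hblkcard : (fullChain C (j + 1)).card - (fullChain C j).card
        = ((fullChain C (j + 1)) \ (fullChain C j)).card :=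
      (Finset.card_sdiff_of_subset (fullChain_mono C (Nat.le_succ j))).symm
    have hblkeq : (fullChain C (j + 1)) \ (fullChain C j)
        = Finset.univ.filter (fun p => lv C p = j) := by
      ext p
      simp only [Finset.mem_sdiff, mem_fullChain, Finset.mem_filter, Finset.mem_univ, true_and]
      omega
    have hsplit : (Finset.univ.filter (fun p => lv C p = j ∧ repP 𝓑 C p = p)).card
          + (Finset.univ.filter (fun p => lv C p = j ∧ repP 𝓑 C p ≠ p)).card
        = (Finset.univ.filter (fun p => lv C p = j)).card := by
      rw [← Finset.filter_filter, ← Finset.filter_filter,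
        Finset.card_filter_add_card_filter_not]
    rw [hblkeq] at hblkcard
    omega
  rw [Finset.sum_congr rfl hterm]
  have hmap : ∀ p ∈ Finset.univ.filter (fun p => repP 𝓑 C p ≠ p),
      lv C p ∈ Finset.range (C.card + 1) := fun p _ =>
    Finset.mem_range.2 (by have := lv_le_card C p; omega)
  rw [Finset.card_eq_sum_card_fiberwise hmap]
  apply Finset.sum_congr rfl
  intro j _
  congr 1
  ext p
  simp only [Finset.mem_filter, Finset.mem_univ, true_and]
  tauto

end Components


/-! ### The span of the face of a flag -/

section SpanComputation

variable {n : ℕ} {𝓑 : Finset (Finset (Fin n))}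

/-- The standard basis vector. -/
noncomputable def epv (p : Fin n) : Fin n → ℝ := indVec ({p} : Finset (Fin n))

lemma epv_apply (p i : Fin n) : epv p i = if i = p then 1 else 0 := by
  simp [epv, indVec]

lemma card_inter_Kc_const (hM : IsMatroid n 𝓑) (C : Finset (Finset (Fin n))) (r : Fin n)
    {B B' : Finset (Fin n)} (hB : B ∈ flagQuotBases 𝓑 C) (hB' : B' ∈ flagQuotBases 𝓑 C) :
    (B ∩ Kc 𝓑 C r).card = (B' ∩ Kc 𝓑 C r).card := by
  classical
  have hjk : lv C r ≤ C.card := lv_le_card C r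
  set j := lv C r with hj
  set K := Kc 𝓑 C r with hK
  have hKblk : K ⊆ fullChain C (j + 1) \ fullChain C j := by
    intro q hq
    rw [hK, mem_Kc] at hq
    exact mem_block_iff.2 (by rw [hq.1])
  have hinv : ∀ p q, mRel (minorBases 𝓑 (fullChain C (j + 1)) (fullChain C j)) p q →
      (p ∈ K ↔ q ∈ K) := by
    intro p q hrel
    obtain ⟨D₁, hD₁, hpD₁, hD₂⟩ := hrel
    have hpb : p ∈ fullChain C (j + 1) \ fullChain C j :=
      minorBases_subset_block hM C hD₁ hpD₁
    have hqb : q ∈ fullChain C (j + 1) \ fullChain C j :=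
      minorBases_subset_block hM C hD₂ (Finset.mem_insert_self _ _)
    have hlvp : lv C p = j := mem_block_iff.1 hpb
    have hlvq : lv C q = j := mem_block_iff.1 hqb
    have hpq : Quot.mk (mRel (minorBases 𝓑 (fullChain C (j + 1)) (fullChain C j))) p
        = Quot.mk (mRel (minorBases 𝓑 (fullChain C (j + 1)) (fullChain C j))) q :=
      Quot.sound ⟨D₁, hD₁, hpD₁, hD₂⟩
    rw [hK, mem_Kc, mem_Kc, ← hj, hlvp, hlvq, hpq]
  have hBD := flagQuot_block_mem_minor hM C hB hjk
  have hBD' := flagQuot_block_mem_minor hM C hB' hjk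
  have hconst := card_inter_const (isMatroid_minorBases hM C j) hinv
    _ hBD _ hBD'
  have hKe : ∀ B0 : Finset (Fin n),
      B0 ∩ (fullChain C (j + 1) \ fullChain C j) ∩ K = B0 ∩ K := by
    intro B0
    rw [Finset.inter_assoc, Finset.inter_eq_right.2 hKblk]
  rwa [hKe B, hKe B'] at hconst

lemma sub_epv_mem_of_mRel (hM : IsMatroid n 𝓑) (C : Finset (Finset (Fin n))) {j : ℕ}
    (hj : j ≤ C.card) {x y : Fin n}
    (h : mRel (minorBases 𝓑 (fullChain C (j + 1)) (fullChain C j)) x y) :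
    epv x - epv y ∈ vectorSpan ℝ
      (indVec '' ((flagQuotBases 𝓑 C : Finset (Finset (Fin n))) : Set (Finset (Fin n)))) := by
  classical
  by_cases hxy : x = y
  · subst hxy
    simpa using (vectorSpan ℝ (indVec '' ((flagQuotBases 𝓑 C : Finset (Finset (Fin n))) :
      Set (Finset (Fin n))))).zero_mem
  obtain ⟨D₁, hD₁, hx, hD₂⟩ := h
  set D₂ := insert y (D₁.erase x) with hD₂def
  have hxblk : x ∈ fullChain C (j + 1) \ fullChain C j :=
    minorBases_subset_block hM C hD₁ hx
  have hyblk : y ∈ fullChain C (j + 1) \ fullChain C j :=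
    minorBases_subset_block hM C hD₂ (Finset.mem_insert_self _ _)
  have hyD₁ : y ∉ D₁ := by
    intro hyD
    have h1 : y ∈ D₁.erase x := Finset.mem_erase.2 ⟨fun h => hxy h.symm, hyD⟩
    have h2 : D₂ = D₁.erase x := by
      rw [hD₂def, Finset.insert_eq_self.2 h1]
    have h3 := card_bases_eq (isMatroid_minorBases hM C j) hD₂ hD₁
    rw [h2, Finset.card_erase_of_mem hx] at h3
    have : 0 < D₁.card := Finset.card_pos.2 ⟨x, hx⟩
    omega
  obtain ⟨B, hB⟩ := flagQuotBases_nonempty hM C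
  set blk := fullChain C (j + 1) \ fullChain C j with hblk
  set B₁ := (B \ blk) ∪ D₁ with hB₁def
  set B₂ := (B \ blk) ∪ D₂ with hB₂def
  have hB₁m : B₁ ∈ flagQuotBases 𝓑 C := flagQuot_swap hM C hB hj hD₁
  have hB₂m : B₂ ∈ flagQuotBases 𝓑 C := flagQuot_swap hM C hB hj hD₂
  have hxB₁ : x ∈ B₁ := Finset.mem_union.2 (Or.inr hx)
  have hxB₂ : x ∉ B₂ := by
    rw [hB₂def]
    intro hmem
    rcases Finset.mem_union.1 hmem with h' | h'
    · exact (Finset.mem_sdiff.1 h').2 hxblk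
    · rcases Finset.mem_insert.1 h' with h'' | h''
      · exact hxy h''
      · exact (Finset.mem_erase.1 h'').1 rfl
  have hyB₂ : y ∈ B₂ := Finset.mem_union.2 (Or.inr (Finset.mem_insert_self _ _))
  have hyB₁ : y ∉ B₁ := by
    rw [hB₁def]
    intro hmem
    rcases Finset.mem_union.1 hmem with h' | h'
    · exact (Finset.mem_sdiff.1 h').2 hyblk
    · exact hyD₁ h'
  have hother : ∀ i : Fin n, i ≠ x → i ≠ y → (i ∈ B₁ ↔ i ∈ B₂) := by
    intro i hix hiy
    rw [hB₁def, hB₂def, Finset.mem_union, Finset.mem_union]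
    constructor
    · rintro (h' | h')
      · exact Or.inl h'
      · exact Or.inr (Finset.mem_insert.2 (Or.inr (Finset.mem_erase.2 ⟨hix, h'⟩)))
    · rintro (h' | h')
      · exact Or.inl h'
      · rcases Finset.mem_insert.1 h' with h'' | h''
        · exact absurd h'' hiy
        · exact Or.inr (Finset.mem_erase.1 h'').2
  have hdiff : indVec B₁ - indVec B₂ = epv x - epv y := by
    funext i
    simp only [Pi.sub_apply, indVec, epv_apply]
    by_cases hix : i = x
    · subst hix
      simp [hxB₁, hxB₂, hxy]
    · by_cases hiy : i = y
      · subst hiy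
        simp [hyB₁, hyB₂, hix]
      · have hiff := hother i hix hiy
        by_cases hiB : i ∈ B₁
        · simp [hiB, hiff.1 hiB, hix, hiy]
        · have hiB₂ : i ∉ B₂ := fun h => hiB (hiff.2 h)
          simp [hiB, hiB₂, hix, hiy]
  rw [← hdiff]
  have h1 : indVec B₁ ∈ indVec '' ((flagQuotBases 𝓑 C : Finset (Finset (Fin n))) :
      Set (Finset (Fin n))) := Set.mem_image_of_mem indVec (Finset.mem_coe.2 hB₁m)
  have h2 : indVec B₂ ∈ indVec '' ((flagQuotBases 𝓑 C : Finset (Finset (Fin n))) :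
      Set (Finset (Fin n))) := Set.mem_image_of_mem indVec (Finset.mem_coe.2 hB₂m)
  have := vsub_mem_vectorSpan ℝ h1 h2
  rwa [vsub_eq_sub] at this

lemma sub_epv_mem_of_eqvGen (hM : IsMatroid n 𝓑) (C : Finset (Finset (Fin n))) {j : ℕ}
    (hj : j ≤ C.card) {x y : Fin n}
    (h : Relation.EqvGen (mRel (minorBases 𝓑 (fullChain C (j + 1)) (fullChain C j))) x y) :
    epv x - epv y ∈ vectorSpan ℝ
      (indVec '' ((flagQuotBases 𝓑 C : Finset (Finset (Fin n))) : Set (Finset (Fin n)))) := by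
  induction h with
  | rel a b hab => exact sub_epv_mem_of_mRel hM C hj hab
  | refl a => simpa using Submodule.zero_mem _
  | symm a b h ih =>
    have := Submodule.neg_mem _ ih
    rwa [neg_sub] at this
  | trans a b c h1 h2 ih1 ih2 =>
    have := Submodule.add_mem _ ih1 ih2
    rwa [sub_add_sub_cancel] at this

lemma sub_epv_mem_vectorSpan (hM : IsMatroid n 𝓑) (C : Finset (Finset (Fin n))) {p q : Fin n}
    (h : q ∈ Kc 𝓑 C p) :
    epv p - epv q ∈ vectorSpan ℝ
      (indVec '' ((flagQuotBases 𝓑 C : Finset (Finset (Fin n))) : Set (Finset (Fin n)))) := by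
  obtain ⟨hlv, hquot⟩ := mem_Kc.1 h
  have hE := Quot.eqvGen_exact hquot.symm
  exact sub_epv_mem_of_eqvGen hM C (lv_le_card C p) hE

end SpanComputation


section FinrankComputation

variable {n : ℕ} {𝓑 : Finset (Finset (Fin n))}

lemma sum_indVec_inter (K B0 : Finset (Fin n)) :
    ∑ q ∈ K, indVec B0 q = ((B0 ∩ K).card : ℝ) := by
  classical
  unfold indVec
  rw [Finset.sum_boole]
  congr 1
  rw [Finset.inter_comm]
  rfl

lemma finrank_vectorSpan_flagQuot (hM : IsMatroid n 𝓑) (C : Finset (Finset (Fin n))) :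
    Module.finrank ℝ (vectorSpan ℝ
        (indVec '' ((flagQuotBases 𝓑 C : Finset (Finset (Fin n))) : Set (Finset (Fin n)))))
      = (Finset.univ.filter (fun p => repP 𝓑 C p ≠ p)).card := by
  classical
  set Vs : Set (Fin n → ℝ) :=
    indVec '' ((flagQuotBases 𝓑 C : Finset (Finset (Fin n))) : Set (Finset (Fin n))) with hVs
  set gens : Finset (Fin n) := Finset.univ.filter (fun p => repP 𝓑 C p ≠ p) with hgens
  set v : {p // p ∈ gens} → (Fin n → ℝ) :=
    fun p => epv p.1 - epv (repP 𝓑 C p.1) with hv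
  have hrepne : ∀ (i₀ : {p // p ∈ gens}) (i : Fin n), repP 𝓑 C i ≠ i₀.1 := by
    rintro i₀ i heq
    have h1 : repP 𝓑 C i₀.1 = i₀.1 := by
      conv_lhs => rw [← heq]
      rw [repP_idem, heq]
    have h2 := i₀.2
    simp only [hgens, Finset.mem_filter, Finset.mem_univ, true_and] at h2
    exact h2 h1
  -- linear independence of the generators
  have hlin : LinearIndependent ℝ v := by
    rw [Fintype.linearIndependent_iff]
    intro g hg i₀
    have hfun := congrFun hg i₀.1
    simp only [Finset.sum_apply, Pi.smul_apply, Pi.zero_apply, hv, Pi.sub_apply,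
      smul_eq_mul, epv_apply] at hfun
    have hterm : ∀ i : {p // p ∈ gens},
        g i * ((if (i₀ : Fin n) = i.1 then (1 : ℝ) else 0)
          - (if (i₀ : Fin n) = repP 𝓑 C i.1 then (1 : ℝ) else 0))
        = if (i₀ : Fin n) = i.1 then g i else 0 := by
      intro i
      have : (i₀ : Fin n) ≠ repP 𝓑 C i.1 := fun h => hrepne i₀ i.1 h.symm
      rw [if_neg this]
      by_cases h : (i₀ : Fin n) = i.1
      · rw [if_pos h, if_pos h]; ring
      · rw [if_neg h, if_neg h]; ring
    rw [Finset.sum_congr rfl (fun i _ => hterm i)] at hfun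
    have hsingle : (∑ i : {p // p ∈ gens}, if (i₀ : Fin n) = i.1 then g i else 0) = g i₀ := by
      rw [Finset.sum_eq_single i₀]
      · simp
      · intro b _ hb
        exact if_neg (fun h => hb (Subtype.ext h.symm))
      · intro h
        exact absurd (Finset.mem_univ i₀) h
    exact hsingle.symm.trans hfun
  -- the span equals the vector span
  have hspan : vectorSpan ℝ Vs = Submodule.span ℝ (Set.range v) := by
    apply le_antisymm
    · rw [vectorSpan_def, Submodule.span_le]
      rintro z hz
      rw [Set.mem_vsub] at hz
      obtain ⟨a, ha, b, hb, rfl⟩ := hz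
      obtain ⟨B, hB, rfl⟩ := ha
      obtain ⟨B', hB', rfl⟩ := hb
      rw [vsub_eq_sub]
      rw [Finset.mem_coe] at hB hB'
      set u : Fin n → ℝ := indVec B - indVec B' with hu
      have hdecomp : u = (∑ p : Fin n, u p • (epv p - epv (repP 𝓑 C p)))
          + ∑ p : Fin n, u p • epv (repP 𝓑 C p) := by
        rw [← Finset.sum_add_distrib]
        funext i
        simp only [Finset.sum_apply, Pi.add_apply, Pi.smul_apply, Pi.sub_apply,
          smul_eq_mul, epv_apply]
        have hstep : ∀ p : Fin n,
            u p * ((if i = p then (1:ℝ) else 0) - (if i = repP 𝓑 C p then (1:ℝ) else 0))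
              + u p * (if i = repP 𝓑 C p then (1:ℝ) else 0)
            = if i = p then u p else 0 := by
          intro p
          by_cases h : i = p
          · rw [if_pos h, if_pos h]; ring
          · rw [if_neg h, if_neg h]; ring
        rw [Finset.sum_congr rfl (fun p _ => hstep p), Finset.sum_ite_eq]
        simp
      have h2 : (∑ p : Fin n, u p • epv (repP 𝓑 C p)) = 0 := by
        have hmap : ∀ p ∈ Finset.univ,
            repP 𝓑 C p ∈ Finset.univ.filter (fun r => repP 𝓑 C r = r) := fun p _ => by
          simp [repP_idem]
        rw [← Finset.sum_fiberwise_of_maps_to hmap (fun p => u p • epv (repP 𝓑 C p))]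
        apply Finset.sum_eq_zero
        intro r hr
        simp only [Finset.mem_filter, Finset.mem_univ, true_and] at hr
        have hcongr : ∀ p ∈ Finset.univ.filter (fun p => repP 𝓑 C p = r),
            u p • epv (repP 𝓑 C p) = u p • epv r := by
          intro p hp
          rw [(Finset.mem_filter.1 hp).2]
        rw [Finset.sum_congr rfl hcongr, ← Finset.sum_smul]
        have hfib : Finset.univ.filter (fun p => repP 𝓑 C p = r) = Kc 𝓑 C r := by
          ext q
          simp only [Finset.mem_filter, Finset.mem_univ, true_and]
          rw [mem_Kc_iff_repP, hr]
        have hsum : ∑ q ∈ Finset.univ.filter (fun p => repP 𝓑 C p = r), u q = 0 := by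
          rw [hfib, hu]
          simp only [Pi.sub_apply]
          rw [Finset.sum_sub_distrib, sum_indVec_inter, sum_indVec_inter,
            card_inter_Kc_const hM C r hB hB', sub_self]
        rw [hsum, zero_smul]
      rw [hdecomp, h2, add_zero]
      apply Submodule.sum_mem
      intro p _
      by_cases hp : repP 𝓑 C p = p
      · rw [hp]
        simp
      · exact Submodule.smul_mem _ _ (Submodule.subset_span
          ⟨⟨p, by rw [hgens]; simp [hp]⟩, rfl⟩)
    · rw [Submodule.span_le]
      rintro z ⟨p, rfl⟩
      exact sub_epv_mem_vectorSpan hM C (repP_mem_Kc 𝓑 C p.1)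
  rw [hspan, finrank_span_eq_card hlin, Fintype.card_coe]

end FinrankComputation

/-- For a matroid `M` on `[n]`, the weighted quasisymmetric enumerator of the
matroid base polytope coincides with the value of the universal morphism of combinatorial Hopf
algebras: `F_q(P_M) = Ψ_q([M]) = Σ_F q^{rk_{P_M}(F)} M_{type(F)}`, whose coefficient of `M_α`
equals `Σ_{F : type(F) = α} Π_i q^{rk((M|_{F_i})/F_{i-1})}` with
`rk(N) = (size of ground set of N) - c(N)`.  Here `F_q(P_M) = Σ_F q^{dim π_{P_M}(F)} M_{type F}`
with `faceOf F = π_{P_M}(F)` the face of `P_M` attached to a flag `F`. -/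
theorem FqEnum_matroid_eq_Psi (n : ℕ) (hn : 0 < n)
    (𝓑 : Finset (Finset (Fin n))) (h𝓑 : IsMatroid n 𝓑)
    (faceOf : Finset (Finset (Fin n)) → Set (Fin n → ℝ))
    (hface : ∀ C : Finset (Finset (Fin n)), IsFlag n C →
      IsFace (basePoly 𝓑) (faceOf C) ∧
        ∀ ω ∈ relintBraidCone C, argmaxSet (basePoly 𝓑) ω = faceOf C)
    (q : ℚ) :
    FqEnum n (fun C => pdim (faceOf C)) q
      = ∑ C : Finset (Finset (Fin n)),
          (if IsFlag n C then q ^ (rkM 𝓑 C) • Mc (flagType C) else 0) := by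
  have key : ∀ C : Finset (Finset (Fin n)), IsFlag n C → pdim (faceOf C) = rkM 𝓑 C := by
    intro C hC
    rw [pdim_faceOf_eq h𝓑 hC faceOf (hface C hC).2, finrank_vectorSpan_flagQuot h𝓑 C,
      rkM_eq_card_nonfix]
  rw [FqEnum]
  apply Finset.sum_congr rfl
  intro C _
  by_cases hC : IsFlag n C
  · rw [if_pos hC, if_pos hC, key C hC]
  · rw [if_neg hC, if_neg hC]
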